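/- (Palais–Smale condition) Fix λ > 0. Let (v_n) be a sequence of functions V → ℝ such that I_λ(v_n) → α for some α ∈ ℝ and such that ε_n → 0, where ε_n is the smallest constant for which |∫_V Γ(v_n, φ) dμ + λ ∫_V e^{u_0+v_n}(e^{u_0+v_n} − 1)^5 φ dμ + (4πN/Vol(V)) ∫_V φ dμ| ≤ ε_n ‖φ‖_{W^{1,2}} holds for all φ : V → ℝ. Then (v_n) has a subsequence converging (pointwise on V, equivalently in W^{1,2}) to some v : V → ℝ. -/

import Mathlib

open Real

/-- The graph Laplacian: `Δu(x) = (1/μ(x)) Σ_y w(x,y)(u(y) − u(x))`. -/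
noncomputable def lapl {V : Type*} [Fintype V] (μ : V → ℝ) (w : V → V → ℝ) (u : V → ℝ) (x : V) : ℝ :=
  (1 / μ x) * ∑ y, w x y * (u y - u x)

/-- The integral on the graph: `∫_V f dμ = Σ_x μ(x) f(x)`. -/
noncomputable def integ {V : Type*} [Fintype V] (μ : V → ℝ) (f : V → ℝ) : ℝ := ∑ x, μ x * f x

/-- The volume of the graph: `Vol(V) = Σ_x μ(x)`. -/
noncomputable def vol {V : Type*} [Fintype V] (μ : V → ℝ) : ℝ := ∑ x, μ x

/-- The Dirac mass at `p`. -/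
noncomputable def dirac {V : Type*} [DecidableEq V] (μ : V → ℝ) (p x : V) : ℝ :=
  if x = p then 1 / μ p else 0

/-- The squared length of the gradient: `|∇u|²(x) = (1/(2μ(x))) Σ_y w(x,y)(u(y) − u(x))²`. -/
noncomputable def gradSq {V : Type*} [Fintype V] (μ : V → ℝ) (w : V → V → ℝ) (u : V → ℝ) (x : V) : ℝ :=
  (1 / (2 * μ x)) * ∑ y, w x y * (u y - u x) ^ 2

/-- The gradient form `Γ(u,φ)(x) = (1/(2μ(x))) Σ_y w(x,y)(u(y) − u(x))(φ(y) − φ(x))`. -/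
noncomputable def gamma {V : Type*} [Fintype V] (μ : V → ℝ) (w : V → V → ℝ) (u φ : V → ℝ) (x : V) : ℝ :=
  (1 / (2 * μ x)) * ∑ y, w x y * (u y - u x) * (φ y - φ x)

/-- `u` solves the generalized Chern–Simons equation
    `Δu = λ e^u (e^u − 1)^5 + 4π Σ_s δ_{p_s}` with parameter `lam`. -/
noncomputable def isSol {V : Type*} [Fintype V] [DecidableEq V] (μ : V → ℝ) (w : V → V → ℝ)
    {N : ℕ} (p : Fin N → V) (lam : ℝ) (u : V → ℝ) : Prop :=
  ∀ x, lapl μ w u x =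
    lam * Real.exp (u x) * (Real.exp (u x) - 1) ^ 5 + 4 * π * ∑ s, dirac μ (p s) x

/-- The energy functional
    `I_λ(v) = ∫_V [ (1/2)|∇v|² + (λ/6)(e^{u₀+v} − 1)^6 + (4πN/Vol(V)) v ] dμ`. -/
noncomputable def energy {V : Type*} [Fintype V] (μ : V → ℝ) (w : V → V → ℝ)
    (u0 : V → ℝ) (N : ℕ) (lam : ℝ) (v : V → ℝ) : ℝ :=
  integ μ (fun x => (1 / 2) * gradSq μ w v x
    + (lam / 6) * (Real.exp (u0 x + v x) - 1) ^ 6 + (4 * π * N / vol μ) * v x)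

/-- The Sobolev `W^{1,2}` norm `(∫_V (|∇v|² + v²) dμ)^{1/2}`. -/
noncomputable def sobNorm {V : Type*} [Fintype V] (μ : V → ℝ) (w : V → V → ℝ)
    (v : V → ℝ) : ℝ :=
  Real.sqrt (integ μ (fun x => gradSq μ w v x + v x ^ 2))

/-- The derivative of the energy functional at `v` in direction `φ`:
    `∫_V Γ(v,φ) dμ + λ ∫_V e^{u₀+v}(e^{u₀+v} − 1)^5 φ dμ + (4πN/Vol(V)) ∫_V φ dμ`. -/
noncomputable def dEnergy {V : Type*} [Fintype V] (μ : V → ℝ) (w : V → V → ℝ)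
    (u0 : V → ℝ) (N : ℕ) (lam : ℝ) (v φ : V → ℝ) : ℝ :=
  integ μ (gamma μ w v φ)
    + lam * integ μ (fun x => Real.exp (u0 x + v x) * (Real.exp (u0 x + v x) - 1) ^ 5 * φ x)
    + (4 * π * N / vol μ) * integ μ φ

section PSHelpers

variable {V : Type*} [Fintype V] [DecidableEq V]
set_option linter.unusedSectionVars false

lemma integ_add (μ f g : V → ℝ) : integ μ (fun x => f x + g x) = integ μ f + integ μ g := by
  simp [integ, Finset.sum_add_distrib, mul_add]

lemma integ_cmul (a : ℝ) (μ f : V → ℝ) : integ μ (fun x => a * f x) = a * integ μ f := by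
  simp only [integ, Finset.mul_sum]; exact Finset.sum_congr rfl fun x _ => by ring

lemma integ_mono (μ f g : V → ℝ) (hmu : ∀ x, 0 ≤ μ x) (h : ∀ x, f x ≤ g x) :
    integ μ f ≤ integ μ g :=
  Finset.sum_le_sum fun x _ => mul_le_mul_of_nonneg_left (h x) (hmu x)

lemma abs_integ_le (μ f : V → ℝ) (C : ℝ) (hmu : ∀ x, 0 ≤ μ x) (h : ∀ x, |f x| ≤ C) :
    |integ μ f| ≤ C * vol μ := by
  calc |integ μ f| ≤ ∑ x, |μ x * f x| := Finset.abs_sum_le_sum_abs _ _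
    _ ≤ ∑ x, μ x * C := Finset.sum_le_sum fun x _ => by
        rw [abs_mul, abs_of_nonneg (hmu x)]
        exact mul_le_mul_of_nonneg_left (h x) (hmu x)
    _ = C * vol μ := by rw [vol, Finset.mul_sum]; exact Finset.sum_congr rfl fun x _ => by ring

lemma integ_const (μ : V → ℝ) (C : ℝ) : integ μ (fun _ => C) = C * vol μ := by
  rw [integ, vol, ← Finset.sum_mul, mul_comm]

lemma gradSq_nonneg' (μ : V → ℝ) (w : V → V → ℝ) (hnn : ∀ x y, 0 ≤ w x y)
    (hmu : ∀ x, 0 < μ x) (u : V → ℝ) (x : V) : 0 ≤ gradSq μ w u x := by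
  apply mul_nonneg
  · have := hmu x; positivity
  · exact Finset.sum_nonneg fun y _ => mul_nonneg (hnn x y) (sq_nonneg _)

lemma integ_gradSq_nonneg (μ : V → ℝ) (w : V → V → ℝ) (hnn : ∀ x y, 0 ≤ w x y)
    (hmu : ∀ x, 0 < μ x) (u : V → ℝ) : 0 ≤ integ μ (gradSq μ w u) :=
  Finset.sum_nonneg fun x _ => mul_nonneg (hmu x).le (gradSq_nonneg' μ w hnn hmu u x)

lemma gamma_self (μ : V → ℝ) (w : V → V → ℝ) (u : V → ℝ) :
    gamma μ w u u = gradSq μ w u := by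
  funext x; unfold gamma gradSq
  congr 1; exact Finset.sum_congr rfl fun y _ => by ring

lemma gamma_one (μ : V → ℝ) (w : V → V → ℝ) (u : V → ℝ) (x : V) :
    gamma μ w u (fun _ => 1) x = 0 := by
  simp [gamma]

lemma integ_point_le (μ f : V → ℝ) (hmu : ∀ x, 0 < μ x) (hf : ∀ x, -1 ≤ f x) (x : V) :
    μ x * f x ≤ integ μ f + vol μ := by
  have h1 : integ μ f - μ x * f x = ∑ y ∈ Finset.univ.erase x, μ y * f y := by
    rw [integ, ← Finset.add_sum_erase _ _ (Finset.mem_univ x)]; ring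
  have h2 : ∑ y ∈ Finset.univ.erase x, μ y * f y ≥ ∑ y ∈ Finset.univ.erase x, μ y * (-1) :=
    Finset.sum_le_sum fun y _ => mul_le_mul_of_nonneg_left (hf y) (hmu y).le
  have h3 : -vol μ ≤ ∑ y ∈ Finset.univ.erase x, μ y * (-1) := by
    have hsub : ∑ y ∈ Finset.univ.erase x, μ y ≤ ∑ y, μ y :=
      Finset.sum_le_sum_of_subset_of_nonneg (Finset.erase_subset _ _) (fun y _ _ => (hmu y).le)
    have heq : ∑ y ∈ Finset.univ.erase x, μ y * (-1) = -(∑ y ∈ Finset.univ.erase x, μ y) := by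
      rw [← Finset.sum_neg_distrib]; exact Finset.sum_congr rfl fun y _ => by ring
    rw [heq, vol]; linarith
  linarith

lemma energy_decomp (μ : V → ℝ) (w : V → V → ℝ) (u0 : V → ℝ) (N : ℕ) (lam : ℝ) (v : V → ℝ) :
    energy μ w u0 N lam v = (1/2) * integ μ (gradSq μ w v)
      + (lam/6) * integ μ (fun x => (Real.exp (u0 x + v x) - 1)^6)
      + (4 * Real.pi * N / vol μ) * integ μ v := by
  unfold energy
  rw [integ_add, integ_add, integ_cmul, integ_cmul, integ_cmul]

lemma sobNorm_one (μ : V → ℝ) (w : V → V → ℝ) :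
    sobNorm μ w (fun _ => 1) = Real.sqrt (vol μ) := by
  unfold sobNorm
  congr 1
  have : ∀ x : V, gradSq μ w (fun _ => 1) x + (1:ℝ)^2 = 1 := by
    intro x; simp [gradSq]
  rw [show (fun x => gradSq μ w (fun _ => 1) x + (1:ℝ)^2) = fun _ : V => (1:ℝ) from funext this]
  simp [integ, vol]

lemma dEnergy_one (μ : V → ℝ) (w : V → V → ℝ) (u0 : V → ℝ) (N : ℕ) (lam : ℝ) (vv : V → ℝ) :
    dEnergy μ w u0 N lam vv (fun _ => 1)
      = lam * integ μ (fun x => Real.exp (u0 x + vv x) * (Real.exp (u0 x + vv x) - 1) ^ 5)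
        + (4 * Real.pi * N / vol μ) * vol μ := by
  unfold dEnergy
  have h1 : integ μ (gamma μ w vv (fun _ => 1)) = 0 := by
    rw [show gamma μ w vv (fun _ => 1) = fun _ : V => (0:ℝ) from funext (gamma_one μ w vv)]
    simp [integ]
  have h2 : integ μ (fun _ : V => (1:ℝ)) = vol μ := by simp [integ, vol]
  rw [h1, h2]
  simp [mul_one]

lemma dEnergy_self (μ : V → ℝ) (w : V → V → ℝ) (u0 : V → ℝ) (N : ℕ) (lam : ℝ) (vv : V → ℝ) :
    dEnergy μ w u0 N lam vv vv
      = integ μ (gradSq μ w vv)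
        + lam * integ μ (fun x => Real.exp (u0 x + vv x) * (Real.exp (u0 x + vv x) - 1) ^ 5 * vv x)
        + (4 * Real.pi * N / vol μ) * integ μ vv := by
  unfold dEnergy
  rw [gamma_self]

lemma edge_osc (μ : V → ℝ) (w : V → V → ℝ) (hnn : ∀ x y, 0 ≤ w x y)
    (hmu : ∀ x, 0 < μ x) {a b : V} (hab : 0 < w a b) (u : V → ℝ) :
    |u b - u a| ≤ Real.sqrt (2 / w a b) * Real.sqrt (integ μ (gradSq μ w u)) := by
  set D := integ μ (gradSq μ w u) with hD
  have hD0 : 0 ≤ D := integ_gradSq_nonneg μ w hnn hmu u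
  have hμa := hmu a
  have h1 : w a b * (u b - u a)^2 ≤ ∑ y, w a y * (u y - u a)^2 :=
    Finset.single_le_sum (f := fun y => w a y * (u y - u a)^2)
      (fun y _ => mul_nonneg (hnn a y) (sq_nonneg _)) (Finset.mem_univ b)
  have h2 : μ a * gradSq μ w u a ≤ D :=
    Finset.single_le_sum (fun x _ => mul_nonneg (hmu x).le (gradSq_nonneg' μ w hnn hmu u x))
      (Finset.mem_univ a)
  have h3 : μ a * gradSq μ w u a = (1/2) * ∑ y, w a y * (u y - u a)^2 := by
    unfold gradSq; field_simp
  have h4 : w a b * (u b - u a)^2 ≤ 2 * D := by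
    rw [h3] at h2; linarith
  have h5 : (u b - u a)^2 ≤ (2 / w a b) * D := by
    rw [div_mul_eq_mul_div, le_div_iff₀ hab]; nlinarith
  calc |u b - u a| = Real.sqrt ((u b - u a)^2) := (Real.sqrt_sq_eq_abs _).symm
    _ ≤ Real.sqrt ((2 / w a b) * D) := Real.sqrt_le_sqrt h5
    _ = Real.sqrt (2 / w a b) * Real.sqrt D := Real.sqrt_mul (by positivity) D

lemma osc_bound (μ : V → ℝ) (w : V → V → ℝ) (hnn : ∀ x y, 0 ≤ w x y)
    (hconn : ∀ x y : V, Relation.ReflTransGen (fun a b => 0 < w a b) x y)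
    (hmu : ∀ x, 0 < μ x) :
    ∃ C, 0 ≤ C ∧ ∀ (u : V → ℝ) (x y : V),
      |u x - u y| ≤ C * Real.sqrt (integ μ (gradSq μ w u)) := by
  have key : ∀ x y : V, ∃ c, 0 ≤ c ∧ ∀ u : V → ℝ,
      |u y - u x| ≤ c * Real.sqrt (integ μ (gradSq μ w u)) := by
    intro x y
    induction hconn x y with
    | refl => exact ⟨0, le_refl 0, fun u => by simp⟩
    | tail hxb hby ih =>
      obtain ⟨c, hc0, hc⟩ := ih
      rename_i b z
      refine ⟨c + Real.sqrt (2 / w b z), by positivity, fun u => ?_⟩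
      have h1 := edge_osc μ w hnn hmu hby u
      have h2 := hc u
      have h3 : |u z - u x| ≤ |u z - u b| + |u b - u x| := abs_sub_le _ _ _
      calc |u z - u x| ≤ |u z - u b| + |u b - u x| := h3
        _ ≤ Real.sqrt (2 / w b z) * Real.sqrt (integ μ (gradSq μ w u))
            + c * Real.sqrt (integ μ (gradSq μ w u)) := add_le_add h1 h2
        _ = (c + Real.sqrt (2 / w b z)) * Real.sqrt (integ μ (gradSq μ w u)) := by ring
  choose c hc0 hc using key
  refine ⟨∑ a : V, ∑ b : V, c a b,
    Finset.sum_nonneg fun a _ => Finset.sum_nonneg fun b _ => hc0 a b, fun u x y => ?_⟩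
  have h1 := hc y x u
  have hcle : c y x ≤ ∑ a : V, ∑ b : V, c a b := by
    calc c y x ≤ ∑ b : V, c y b :=
          Finset.single_le_sum (fun b _ => hc0 y b) (Finset.mem_univ x)
      _ ≤ ∑ a : V, ∑ b : V, c a b :=
          Finset.single_le_sum (fun a _ => Finset.sum_nonneg fun b _ => hc0 a b) (Finset.mem_univ y)
  calc |u x - u y| ≤ c y x * Real.sqrt (integ μ (gradSq μ w u)) := h1
    _ ≤ (∑ a : V, ∑ b : V, c a b) * Real.sqrt (integ μ (gradSq μ w u)) :=
        mul_le_mul_of_nonneg_right hcle (Real.sqrt_nonneg _)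

end PSHelpers

section FLemmas

lemma f_ge_neg_one (t : ℝ) : -1 ≤ Real.exp t * (Real.exp t - 1)^5 := by
  have h : 0 < Real.exp t := Real.exp_pos t
  set s := Real.exp t
  nlinarith [sq_nonneg (s-1), sq_nonneg ((s-1)^2), sq_nonneg ((s-1)^3), sq_nonneg (s*(s-1)^2)]

lemma f_ge_exp (t : ℝ) : Real.exp t - 2 ≤ Real.exp t * (Real.exp t - 1)^5 := by
  have h : 0 < Real.exp t := Real.exp_pos t
  set s := Real.exp t
  nlinarith [sq_nonneg (s-1), sq_nonneg ((s-1)^2), pow_pos h 5, sq_nonneg (s*(s-1)^2),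
    sq_nonneg ((s-1)^3), sq_nonneg (s-2)]

lemma f_abs_le {t A : ℝ} (h : Real.exp t ≤ A) : |Real.exp t * (Real.exp t - 1)^5| ≤ A * (A+1)^5 := by
  have h0 : 0 < Real.exp t := Real.exp_pos t
  have hA : 0 < A := lt_of_lt_of_le h0 h
  rw [abs_mul, abs_of_pos h0, abs_pow]
  have h1 : |Real.exp t - 1| ≤ A + 1 := by
    rw [abs_sub_comm]
    calc |1 - Real.exp t| ≤ 1 + Real.exp t := by
          rw [abs_sub_le_iff]; constructor <;> nlinarith
      _ ≤ A + 1 := by linarith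
  exact mul_le_mul h (pow_le_pow_left₀ (abs_nonneg _) h1 5) (pow_nonneg (abs_nonneg _) 5) hA.le

lemma ft_abs_le {t A : ℝ} (hA : 1 ≤ A) (h : Real.exp t ≤ A) :
    |Real.exp t * (Real.exp t - 1)^5 * t| ≤ 1 + A * (A+1)^5 * Real.log A := by
  have h0 : 0 < Real.exp t := Real.exp_pos t
  have hA0 : (0:ℝ) < A := by linarith
  have hlogA : 0 ≤ Real.log A := Real.log_nonneg hA
  have hAA : 0 ≤ A * (A+1)^5 := by positivity
  rcases le_or_gt t 0 with ht | ht
  · have he1 : Real.exp t ≤ 1 := Real.exp_le_one_iff.2 ht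
    have h1 : |Real.exp t - 1| ≤ 1 := by rw [abs_le]; constructor <;> nlinarith
    have h2 : |Real.exp t * (Real.exp t - 1)^5 * t| = Real.exp t * |Real.exp t - 1|^5 * |t| := by
      rw [abs_mul, abs_mul, abs_of_pos h0, abs_pow]
    have h3 : Real.exp t * |t| ≤ 1 := by
      rw [abs_of_nonpos ht]
      have := Real.add_one_le_exp (-t)
      calc Real.exp t * -t ≤ Real.exp t * Real.exp (-t) := by
            apply mul_le_mul_of_nonneg_left _ h0.le; linarith
        _ = 1 := by rw [← Real.exp_add]; simp
    have h4 : |Real.exp t - 1|^5 ≤ 1 := by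
      calc |Real.exp t - 1|^5 ≤ 1^5 := pow_le_pow_left₀ (abs_nonneg _) h1 5
        _ = 1 := one_pow 5
    have h5 : Real.exp t * |Real.exp t - 1|^5 * |t| ≤ 1 := by
      calc Real.exp t * |Real.exp t - 1|^5 * |t| ≤ Real.exp t * 1 * |t| := by
            apply mul_le_mul_of_nonneg_right _ (abs_nonneg t)
            exact mul_le_mul_of_nonneg_left h4 h0.le
        _ = Real.exp t * |t| := by ring
        _ ≤ 1 := h3
    rw [h2]; nlinarith
  · have htlog : t ≤ Real.log A := by
      have := Real.log_le_log h0 h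
      rwa [Real.log_exp] at this
    have h5 : |Real.exp t * (Real.exp t - 1)^5 * t|
        = |Real.exp t * (Real.exp t - 1)^5| * |t| := abs_mul _ _
    have h6 : |t| ≤ Real.log A := by rw [abs_of_pos ht]; exact htlog
    have h7 := f_abs_le h
    rw [h5]
    calc |Real.exp t * (Real.exp t - 1)^5| * |t| ≤ (A * (A+1)^5) * Real.log A :=
          mul_le_mul h7 h6 (abs_nonneg _) hAA
      _ ≤ 1 + A * (A+1)^5 * Real.log A := by linarith

end FLemmas
set_option maxHeartbeats 1600000 in
/-- Palais–Smale condition: if `I_λ(v_n) → α` and the smallest constants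
`ε_n` with `|I_λ'(v_n)[φ]| ≤ ε_n ‖φ‖_{W^{1,2}}` for all `φ` tend to `0`, then `(v_n)` has
a pointwise convergent subsequence. -/
theorem palais_smale {V : Type*} [Fintype V] [DecidableEq V] [Nonempty V]
    (w : V → V → ℝ) (μ : V → ℝ)
    (hsymm : ∀ x y, w x y = w y x) (hnn : ∀ x y, 0 ≤ w x y)
    (hconn : ∀ x y : V, Relation.ReflTransGen (fun a b => 0 < w a b) x y)
    (hmu : ∀ x, 0 < μ x)
    (N : ℕ) (hN : 1 ≤ N) (p : Fin N → V) (hp : Function.Injective p)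
    (u0 : V → ℝ)
    (hu0 : ∀ x, lapl μ w u0 x = -(4 * π * N / vol μ) + 4 * π * ∑ s, dirac μ (p s) x)
    (lam : ℝ) (hlam : 0 < lam)
    (v : ℕ → V → ℝ) (α : ℝ)
    (hI : Filter.Tendsto (fun n => energy μ w u0 N lam (v n)) Filter.atTop (nhds α))
    (ε : ℕ → ℝ)
    (hεbound : ∀ n, ∀ φ : V → ℝ,
      |dEnergy μ w u0 N lam (v n) φ| ≤ ε n * sobNorm μ w φ)
    (hεleast : ∀ n, ∀ c : ℝ,
      (∀ φ : V → ℝ, |dEnergy μ w u0 N lam (v n) φ| ≤ c * sobNorm μ w φ) → ε n ≤ c)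
    (hε0 : Filter.Tendsto ε Filter.atTop (nhds 0)) :
    ∃ (σ : ℕ → ℕ) (v0 : V → ℝ), StrictMono σ ∧
      ∀ x, Filter.Tendsto (fun n => v (σ n) x) Filter.atTop (nhds (v0 x)) := by
  classical
  -- basic positivity facts
  have hVol : 0 < vol μ := Finset.sum_pos (fun x _ => hmu x) Finset.univ_nonempty
  have hNpos : (0:ℝ) < N := by exact_mod_cast Nat.lt_of_lt_of_le Nat.zero_lt_one hN
  obtain ⟨c, hc_def, hc⟩ : ∃ c : ℝ, c = 4 * π * N / vol μ ∧ 0 < c :=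
    ⟨_, rfl, div_pos (mul_pos (by positivity) hNpos) hVol⟩
  have hsqrtVol : 0 < Real.sqrt (vol μ) := Real.sqrt_pos.2 hVol
  -- ε n is nonnegative
  have hε_nn : ∀ n, 0 ≤ ε n := by
    intro n
    have h := (abs_nonneg _).trans (hεbound n (fun _ => 1))
    rw [sobNorm_one] at h
    have h0 : (0:ℝ) * Real.sqrt (vol μ) ≤ ε n * Real.sqrt (vol μ) := by rw [zero_mul]; exact h
    exact le_of_mul_le_mul_right h0 hsqrtVol
  obtain ⟨Cε, hCε⟩ : ∃ C, ∀ n, ε n ≤ C := by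
    obtain ⟨C, hC⟩ := hε0.bddAbove_range
    exact ⟨C, fun n => hC ⟨n, rfl⟩⟩
  have hCε0 : 0 ≤ Cε := le_trans (hε_nn 0) (hCε 0)
  obtain ⟨CI, hCI0, hCI⟩ : ∃ C, 0 ≤ C ∧ ∀ n, |energy μ w u0 N lam (v n)| ≤ C := by
    obtain ⟨Cu, hCu⟩ := hI.bddAbove_range
    obtain ⟨Cl, hCl⟩ := hI.bddBelow_range
    refine ⟨|Cu| + |Cl|, by positivity, fun n => ?_⟩
    have h1 := hCu ⟨n, rfl⟩
    have h2 := hCl ⟨n, rfl⟩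
    rw [abs_le]
    constructor
    · have := neg_abs_le Cl; simp only at h1 h2; linarith [le_abs_self Cu, abs_nonneg Cu]
    · simp only at h1 h2; linarith [le_abs_self Cu, neg_abs_le Cl, abs_nonneg Cl]
  -- minimum of μ and max of |u0|
  obtain ⟨μm, hμm0, hμmle⟩ : ∃ m : ℝ, 0 < m ∧ ∀ x, m ≤ μ x := by
    obtain ⟨xm, -, hxm⟩ := Finset.exists_min_image Finset.univ μ Finset.univ_nonempty
    exact ⟨μ xm, hmu xm, fun x => hxm x (Finset.mem_univ x)⟩
  obtain ⟨CU, hCU0, hCU⟩ : ∃ C : ℝ, 0 ≤ C ∧ ∀ x, |u0 x| ≤ C := by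
    obtain ⟨xu, -, hxu⟩ := Finset.exists_max_image Finset.univ (fun x => |u0 x|) Finset.univ_nonempty
    exact ⟨|u0 xu|, abs_nonneg _, fun x => hxu x (Finset.mem_univ x)⟩
  -- uniform upper bound on the exponential
  have hFle : ∀ n, integ μ (fun x => Real.exp (u0 x + v n x) * (Real.exp (u0 x + v n x) - 1)^5)
      ≤ Cε * Real.sqrt (vol μ) / lam := by
    intro n
    have h := hεbound n (fun _ => 1)
    rw [dEnergy_one, sobNorm_one, ← hc_def] at h
    have h2 := (abs_le.1 h).2
    have h3 : ε n * Real.sqrt (vol μ) ≤ Cε * Real.sqrt (vol μ) :=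
      mul_le_mul_of_nonneg_right (hCε n) (Real.sqrt_nonneg _)
    have h4 : 0 < c * vol μ := mul_pos hc hVol
    rw [le_div_iff₀ hlam]
    linarith only [h2, h3, h4]
  obtain ⟨A, hA_def, hA1⟩ : ∃ A : ℝ, A = (Cε * Real.sqrt (vol μ) / lam + vol μ)/μm + 2 ∧ 1 ≤ A := by
    refine ⟨_, rfl, ?_⟩
    have hB0 : 0 ≤ Cε * Real.sqrt (vol μ) / lam := div_nonneg (mul_nonneg hCε0 (Real.sqrt_nonneg _)) hlam.le
    have := div_nonneg (by linarith : (0:ℝ) ≤ Cε * Real.sqrt (vol μ) / lam + vol μ) hμm0.le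
    linarith
  have hexp : ∀ n x, Real.exp (u0 x + v n x) ≤ A := by
    intro n x
    have h1 := integ_point_le μ
      (fun x => Real.exp (u0 x + v n x) * (Real.exp (u0 x + v n x) - 1)^5)
      hmu (fun y => f_ge_neg_one _) x
    have h2 := hFle n
    have h3 := f_ge_exp (u0 x + v n x)
    have h4 : Real.exp (u0 x + v n x) * (Real.exp (u0 x + v n x) - 1)^5
        ≤ (Cε * Real.sqrt (vol μ) / lam + vol μ)/μ x := by
      rw [le_div_iff₀ (hmu x)]
      linarith only [h1, h2]
    have h5 : (Cε * Real.sqrt (vol μ) / lam + vol μ)/μ x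
        ≤ (Cε * Real.sqrt (vol μ) / lam + vol μ)/μm := by
      apply div_le_div_of_nonneg_left _ hμm0 (hμmle x)
      have hB0 : 0 ≤ Cε * Real.sqrt (vol μ) / lam := div_nonneg (mul_nonneg hCε0 (Real.sqrt_nonneg _)) hlam.le
      linarith
    rw [hA_def]
    linarith
  have hA0 : (0:ℝ) ≤ A := by linarith
  have hK0 : 0 ≤ A*(A+1)^5 := mul_nonneg hA0 (pow_nonneg (by linarith) 5)
  have hlogA : 0 ≤ Real.log A := Real.log_nonneg hA1
  -- bound on the nonlinear integral against v itself
  obtain ⟨Cf, hCf0, hP⟩ : ∃ Cf : ℝ, 0 ≤ Cf ∧ ∀ n,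
      |integ μ (fun x => Real.exp (u0 x + v n x) * (Real.exp (u0 x + v n x) - 1)^5 * v n x)| ≤ Cf := by
    refine ⟨(1 + A*(A+1)^5*Real.log A + A*(A+1)^5*CU) * vol μ, ?_, fun n => ?_⟩
    · refine mul_nonneg ?_ hVol.le
      linarith only [mul_nonneg hK0 hlogA, mul_nonneg hK0 hCU0]
    · apply abs_integ_le _ _ _ (fun y => (hmu y).le)
      intro x
      have e1 : Real.exp (u0 x + v n x) * (Real.exp (u0 x + v n x) - 1)^5 * v n x
          = Real.exp (u0 x + v n x) * (Real.exp (u0 x + v n x) - 1)^5 * (u0 x + v n x)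
            - Real.exp (u0 x + v n x) * (Real.exp (u0 x + v n x) - 1)^5 * u0 x := by ring
      rw [e1]
      have e2 := ft_abs_le hA1 (hexp n x)
      have e3 := f_abs_le (hexp n x)
      have e4 : |Real.exp (u0 x + v n x) * (Real.exp (u0 x + v n x) - 1)^5 * u0 x| ≤ A*(A+1)^5 * CU := by
        rw [abs_mul]
        exact mul_le_mul e3 (hCU x) (abs_nonneg _) hK0
      have e5 : |Real.exp (u0 x + v n x) * (Real.exp (u0 x + v n x) - 1)^5 * (u0 x + v n x)
          - Real.exp (u0 x + v n x) * (Real.exp (u0 x + v n x) - 1)^5 * u0 x|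
          ≤ |Real.exp (u0 x + v n x) * (Real.exp (u0 x + v n x) - 1)^5 * (u0 x + v n x)|
            + |Real.exp (u0 x + v n x) * (Real.exp (u0 x + v n x) - 1)^5 * u0 x| := by
        rw [sub_eq_add_neg]
        refine (abs_add_le _ _).trans ?_
        rw [abs_neg]
      calc _ ≤ _ := e5
        _ ≤ (1 + A*(A+1)^5*Real.log A) + A*(A+1)^5*CU := add_le_add e2 e4
        _ = 1 + A*(A+1)^5*Real.log A + A*(A+1)^5*CU := by ring
  -- bounds on the sixth-power integral
  have hGl : ∀ n, 0 ≤ integ μ (fun x => (Real.exp (u0 x + v n x) - 1)^6) :=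
    fun n => Finset.sum_nonneg fun x _ => mul_nonneg (hmu x).le (by positivity)
  obtain ⟨CG, hCG0, hGu⟩ : ∃ C : ℝ, 0 ≤ C ∧ ∀ n,
      integ μ (fun x => (Real.exp (u0 x + v n x) - 1)^6) ≤ C := by
    refine ⟨(A+1)^6 * vol μ, mul_nonneg (pow_nonneg (by linarith) 6) hVol.le, fun n => ?_⟩
    calc integ μ (fun x => (Real.exp (u0 x + v n x) - 1)^6)
        ≤ integ μ (fun _ => (A+1)^6) := by
          apply integ_mono _ _ _ (fun y => (hmu y).le)
          intro x
          have h0 := Real.exp_pos (u0 x + v n x)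
          have h1 : |Real.exp (u0 x + v n x) - 1| ≤ A + 1 := by
            rw [abs_le]; constructor
            · linarith only [h0, hA0]
            · linarith only [hexp n x]
          calc (Real.exp (u0 x + v n x) - 1)^6 = |(Real.exp (u0 x + v n x) - 1)^6| :=
                (abs_of_nonneg (by positivity)).symm
            _ = |Real.exp (u0 x + v n x) - 1|^6 := (pow_abs _ _).symm
            _ ≤ (A+1)^6 := pow_le_pow_left₀ (abs_nonneg _) h1 6
      _ = (A+1)^6 * vol μ := integ_const μ _
  -- Poincaré-type oscillation bound
  obtain ⟨CP, hCP0, hCP⟩ := osc_bound μ w hnn hconn hmu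
  -- rewritten energy and derivative bounds
  have hi : ∀ n, |1/2 * integ μ (gradSq μ w (v n))
      + lam/6 * integ μ (fun x => (Real.exp (u0 x + v n x) - 1)^6)
      + c * integ μ (v n)| ≤ CI := by
    intro n
    have h := hCI n
    rw [energy_decomp μ w u0 N lam (v n), ← hc_def] at h
    exact h
  have hii : ∀ n, |integ μ (gradSq μ w (v n))
      + lam * integ μ (fun x => Real.exp (u0 x + v n x) * (Real.exp (u0 x + v n x) - 1)^5 * v n x)
      + c * integ μ (v n)| ≤ ε n * sobNorm μ w (v n) := by
    intro n
    have h := hεbound n (v n)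
    rw [dEnergy_self μ w u0 N lam (v n), ← hc_def] at h
    exact h
  -- pointwise bound via oscillation
  have hsup : ∀ n x, vol μ * |v n x| ≤ |integ μ (v n)|
      + CP * Real.sqrt (integ μ (gradSq μ w (v n))) * vol μ := by
    intro n x
    have h1 : vol μ * v n x - integ μ (v n) = ∑ y, μ y * (v n x - v n y) := by
      unfold vol integ
      rw [Finset.sum_mul, ← Finset.sum_sub_distrib]
      exact Finset.sum_congr rfl fun y _ => by ring
    have h2 : |∑ y, μ y * (v n x - v n y)|
        ≤ CP * Real.sqrt (integ μ (gradSq μ w (v n))) * vol μ := by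
      calc |∑ y, μ y * (v n x - v n y)| ≤ ∑ y, |μ y * (v n x - v n y)| :=
            Finset.abs_sum_le_sum_abs _ _
        _ ≤ ∑ y, μ y * (CP * Real.sqrt (integ μ (gradSq μ w (v n)))) := by
            refine Finset.sum_le_sum fun y _ => ?_
            rw [abs_mul, abs_of_nonneg (hmu y).le]
            exact mul_le_mul_of_nonneg_left (hCP (v n) x y) (hmu y).le
        _ = CP * Real.sqrt (integ μ (gradSq μ w (v n))) * vol μ := by
            rw [← Finset.sum_mul, mul_comm]
            rfl
    have h4 : vol μ * |v n x| = |vol μ * v n x| := by rw [abs_mul, abs_of_pos hVol]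
    calc vol μ * |v n x| = |vol μ * v n x| := h4
      _ = |(vol μ * v n x - integ μ (v n)) + integ μ (v n)| := by congr 1; ring
      _ ≤ |vol μ * v n x - integ μ (v n)| + |integ μ (v n)| := abs_add_le _ _
      _ ≤ CP * Real.sqrt (integ μ (gradSq μ w (v n))) * vol μ + |integ μ (v n)| := by
          rw [h1]; exact add_le_add_left h2 _
      _ = |integ μ (v n)| + CP * Real.sqrt (integ μ (gradSq μ w (v n))) * vol μ := by ring
  -- constants for the final estimate
  obtain ⟨C3, hC30, hC3eq⟩ : ∃ r : ℝ, 0 ≤ r ∧ r = 2*(CI + lam*Cf + lam/6*CG) := by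
    refine ⟨_, ?_, rfl⟩
    linarith only [mul_nonneg hlam.le hCf0, mul_nonneg hlam.le hCG0, hCI0]
  obtain ⟨C4, hC40, hC4eq⟩ : ∃ r : ℝ, 0 ≤ r ∧ r = CI + C3/2 + lam/6*CG := by
    refine ⟨_, ?_, rfl⟩
    linarith only [mul_nonneg hlam.le hCG0, hCI0, hC30]
  have hbase : (0:ℝ) ≤ 1 + 2*CP^2*vol μ := by linarith only [mul_nonneg (mul_nonneg (by norm_num : (0:ℝ) ≤ 2) (sq_nonneg CP)) hVol.le]
  have hβnn : (0:ℝ) ≤ c^2*vol μ^2*(1+2*CP^2*vol μ) :=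
    mul_nonneg (mul_nonneg (sq_nonneg c) (sq_nonneg (vol μ))) hbase
  have hκ : 0 < c^2*vol μ^2 := mul_pos (pow_pos hc 2) (pow_pos hVol 2)
  have hY : 0 < c^2*vol μ^2*(1+2*CP^2*vol μ) + 4*vol μ := by linarith only [hβnn, hVol]
  obtain ⟨δ, hδpos, hδ1, hδ3⟩ : ∃ d : ℝ, 0 < d ∧ d ≤ 1 ∧
      d*(c^2*vol μ^2*(1+2*CP^2*vol μ) + 4*vol μ) ≤ (c^2*vol μ^2)/2 := by
    refine ⟨min 1 ((c^2*vol μ^2)/(2*(c^2*vol μ^2*(1+2*CP^2*vol μ) + 4*vol μ))),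
      lt_min one_pos (div_pos hκ (by linarith)), min_le_left _ _, ?_⟩
    calc (min 1 ((c^2*vol μ^2)/(2*(c^2*vol μ^2*(1+2*CP^2*vol μ) + 4*vol μ))))
          * (c^2*vol μ^2*(1+2*CP^2*vol μ) + 4*vol μ)
        ≤ ((c^2*vol μ^2)/(2*(c^2*vol μ^2*(1+2*CP^2*vol μ) + 4*vol μ)))
          * (c^2*vol μ^2*(1+2*CP^2*vol μ) + 4*vol μ) :=
          mul_le_mul_of_nonneg_right (min_le_right _ _) hY.le
      _ = (c^2*vol μ^2)/2 := by field_simp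
  obtain ⟨R2, hR20, hR2eq⟩ : ∃ r : ℝ, 0 ≤ r ∧
      c^2*vol μ^2*r = 2*(c^2*vol μ^2*(1+2*CP^2*vol μ)*C3 + 4*vol μ*C4^2 + c^2*vol μ^2*(1+2*CP^2*vol μ)) := by
    refine ⟨(2*(c^2*vol μ^2*(1+2*CP^2*vol μ)*C3 + 4*vol μ*C4^2 + c^2*vol μ^2*(1+2*CP^2*vol μ)))/(c^2*vol μ^2), ?_, ?_⟩
    · apply div_nonneg _ hκ.le
      linarith only [mul_nonneg hβnn hC30, mul_nonneg hVol.le (sq_nonneg C4), hβnn]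
    · field_simp
  -- the key uniform bound
  have hkey : ∀ n, ε n ≤ δ → ∀ x, |v n x| ≤ Real.sqrt (R2/μm) := by
    intro n hen
    have hi_n := hi n
    have hii_n := hii n
    have hP_n := hP n
    have hGu_n := hGu n
    have hGl_n := hGl n
    have hsup_n := hsup n
    have he0' : 0 ≤ ε n := hε_nn n
    clear hεbound hεleast hI hε0 hi hii hsup hP hGu hGl hexp hFle hu0 hCI hCε hCU hconn hp hsymm hε_nn hCε0 hCU0 hCI0 hA_def
    have hD0 : 0 ≤ integ μ (gradSq μ w (v n)) := integ_gradSq_nonneg μ w hnn hmu (v n)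
    have hV20 : 0 ≤ integ μ (fun x => v n x ^ 2) :=
      Finset.sum_nonneg fun x _ => mul_nonneg (hmu x).le (sq_nonneg _)
    have hQ0 : 0 ≤ integ μ (fun x => gradSq μ w (v n) x + v n x ^ 2) :=
      Finset.sum_nonneg fun x _ => mul_nonneg (hmu x).le
        (add_nonneg (gradSq_nonneg' μ w hnn hmu (v n) x) (sq_nonneg _))
    have hTsq : sobNorm μ w (v n) ^ 2
        = integ μ (gradSq μ w (v n)) + integ μ (fun x => v n x ^ 2) := by
      rw [sobNorm, Real.sq_sqrt hQ0]
      exact integ_add μ (gradSq μ w (v n)) (fun x => v n x ^ 2)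
    have hT0 : 0 ≤ sobNorm μ w (v n) := Real.sqrt_nonneg _
    have ha2 : Real.sqrt (integ μ (gradSq μ w (v n))) ^ 2 = integ μ (gradSq μ w (v n)) :=
      Real.sq_sqrt hD0
    have ha0 : 0 ≤ Real.sqrt (integ μ (gradSq μ w (v n))) := Real.sqrt_nonneg _
    set T := sobNorm μ w (v n) with hTdef
    set D := integ μ (gradSq μ w (v n)) with hDdef
    set V2 := integ μ (fun x => v n x ^ 2) with hV2def
    set S := integ μ (v n) with hSdef
    set P := integ μ (fun x => Real.exp (u0 x + v n x) * (Real.exp (u0 x + v n x) - 1)^5 * v n x) with hPdef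
    set G := integ μ (fun x => (Real.exp (u0 x + v n x) - 1)^6) with hGdef
    set a := Real.sqrt D with hadef
    set e := ε n with hedef
    have he0 : 0 ≤ e := he0'
    have heT0 : 0 ≤ e * T := mul_nonneg he0 hT0
    obtain ⟨hii_l, hii_u⟩ := abs_le.1 hii_n
    obtain ⟨hi_l, hi_u⟩ := abs_le.1 hi_n
    obtain ⟨hP_l, hP_u⟩ := abs_le.1 hP_n
    have hlam6 : (0:ℝ) ≤ lam/6 := by positivity
    have e3 : lam/6 * G ≤ lam/6 * CG := mul_le_mul_of_nonneg_left hGu_n hlam6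
    have e4 : 0 ≤ lam/6 * G := mul_nonneg hlam6 hGl_n
    have e5 : 0 ≤ lam/6 * CG := mul_nonneg hlam6 hCG0
    have e1 : lam * P ≤ lam * Cf := mul_le_mul_of_nonneg_left hP_u hlam.le
    have e2 : lam * (-Cf) ≤ lam * P := mul_le_mul_of_nonneg_left hP_l hlam.le
    have hDb : D ≤ C3 + 2*(e*T) := by linarith only [hii_u, hi_l, e1, e2, e3, e4, hC3eq]
    have hcsb : c * |S| ≤ C4 + e*T := by
      have habs : |c*S| = c*|S| := by rw [abs_mul, abs_of_pos hc]
      rw [← habs, abs_le]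
      constructor
      · linarith only [hi_l, e3, hDb, heT0, hC4eq]
      · linarith only [hi_u, e4, hD0, heT0, hC4eq, hC30, e5]
    have hs0 : 0 ≤ |S| := abs_nonneg S
    -- bound on V2 via the oscillation estimate
    have hV2b : vol μ^2 * V2 ≤ (|S| + CP*a*vol μ)^2 * vol μ := by
      have hpt : ∀ y, vol μ^2 * (v n y ^ 2) ≤ (|S| + CP*a*vol μ)^2 := by
        intro y
        have h1 := hsup_n y
        have h2 : (vol μ * |v n y|)^2 ≤ (|S| + CP*a*vol μ)^2 :=
          pow_le_pow_left₀ (mul_nonneg hVol.le (abs_nonneg _)) h1 2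
        calc vol μ^2 * (v n y ^ 2) = (vol μ * |v n y|)^2 := by rw [mul_pow, sq_abs]
          _ ≤ _ := h2
      calc vol μ^2 * V2 = integ μ (fun y => vol μ^2 * (v n y ^ 2)) := (integ_cmul _ μ _).symm
        _ ≤ integ μ (fun _ => (|S| + CP*a*vol μ)^2) :=
            integ_mono μ _ _ (fun y => (hmu y).le) hpt
        _ = (|S| + CP*a*vol μ)^2 * vol μ := integ_const μ _
    have hTv : T^2 = a^2 + V2 := by rw [ha2]; exact hTsq
    have hT2vol : T^2 * vol μ^2 ≤ a^2 * vol μ^2 + (|S| + CP*a*vol μ)^2 * vol μ := by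
      have h := congrArg (fun z : ℝ => z * vol μ^2) hTv
      linarith only [h, hV2b]
    -- the quadratic self-improvement
    have s1 : c^2*(T^2*vol μ^2) ≤ c^2*(a^2*vol μ^2 + (|S| + CP*a*vol μ)^2*vol μ) :=
      mul_le_mul_of_nonneg_left hT2vol (sq_nonneg c)
    have s2 : (|S| + CP*a*vol μ)^2 ≤ 2*|S|^2 + 2*CP^2*a^2*vol μ^2 := by
      linarith only [sq_nonneg (|S| - CP*a*vol μ)]
    have s2' : (c^2*vol μ)*((|S| + CP*a*vol μ)^2) ≤ (c^2*vol μ)*(2*|S|^2 + 2*CP^2*a^2*vol μ^2) :=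
      mul_le_mul_of_nonneg_left s2 (mul_nonneg (sq_nonneg c) hVol.le)
    have s3 : c^2*|S|^2 ≤ (C4 + e*T)^2 := by
      have h := mul_self_le_mul_self (mul_nonneg hc.le hs0) hcsb
      linarith only [h]
    have s3' : (2*vol μ)*(c^2*|S|^2) ≤ (2*vol μ)*((C4+e*T)^2) :=
      mul_le_mul_of_nonneg_left s3 (by linarith)
    have s4 : (C4+e*T)^2 ≤ 2*C4^2 + 2*(e*T)^2 := by linarith only [sq_nonneg (C4 - e*T)]
    have s4' : (2*vol μ)*((C4+e*T)^2) ≤ (2*vol μ)*(2*C4^2 + 2*(e*T)^2) :=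
      mul_le_mul_of_nonneg_left s4 (by linarith)
    have hDb' : a^2 ≤ C3 + 2*(e*T) := by rw [ha2]; exact hDb
    have s5' : (c^2*vol μ^2*(1+2*CP^2*vol μ))*(a^2)
        ≤ (c^2*vol μ^2*(1+2*CP^2*vol μ))*(C3+2*(e*T)) :=
      mul_le_mul_of_nonneg_left hDb' hβnn
    have hstep : c^2*vol μ^2*T^2 ≤ (c^2*vol μ^2*(1+2*CP^2*vol μ))*(C3+2*(e*T))
        + 4*vol μ*C4^2 + 4*vol μ*(e*T)^2 := by
      linarith only [s1, s2', s3', s4', s5']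
    have s6 : (c^2*vol μ^2*(1+2*CP^2*vol μ))*(2*(e*T))
        ≤ (c^2*vol μ^2*(1+2*CP^2*vol μ))*(δ*(1+T^2)) := by
      apply mul_le_mul_of_nonneg_left _ hβnn
      have h6 : 2*T ≤ 1 + T^2 := by linarith only [sq_nonneg (T-1)]
      have h7 : e*(2*T) ≤ e*(1+T^2) := mul_le_mul_of_nonneg_left h6 he0
      have h8 : e*(1+T^2) ≤ δ*(1+T^2) :=
        mul_le_mul_of_nonneg_right hen (by linarith only [sq_nonneg T])
      linarith only [h7, h8]
    have s7 : 4*vol μ*(e*T)^2 ≤ (4*vol μ)*(δ*T^2) := by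
      have h9 : e^2 ≤ δ := by
        linarith only [mul_nonneg (sub_nonneg.2 hen) he0, mul_nonneg (sub_nonneg.2 hδ1) hδpos.le,
          mul_nonneg hδpos.le (sub_nonneg.2 hen)]
      have h10 := mul_le_mul_of_nonneg_right h9 (sq_nonneg T)
      have h11 := mul_le_mul_of_nonneg_left h10 (by linarith only [hVol] : (0:ℝ) ≤ 4*vol μ)
      linarith only [h11]
    have s8 := mul_le_mul_of_nonneg_right hδ3 (sq_nonneg T)
    have s9 : (c^2*vol μ^2*(1+2*CP^2*vol μ))*δ ≤ (c^2*vol μ^2*(1+2*CP^2*vol μ))*1 :=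
      mul_le_mul_of_nonneg_left hδ1 hβnn
    have hT2R : T^2 ≤ R2 := by
      have hfin : c^2*vol μ^2*T^2 ≤ c^2*vol μ^2*R2 := by
        linarith only [hstep, s6, s7, s8, s9, hR2eq]
      exact le_of_mul_le_mul_left (by linarith) hκ
    -- conclude the pointwise bound
    intro x
    have m1 : μ x * v n x ^ 2 ≤ V2 :=
      Finset.single_le_sum (f := fun y => μ y * v n y ^ 2)
        (fun y _ => mul_nonneg (hmu y).le (sq_nonneg _)) (Finset.mem_univ x)
    have m2 : V2 ≤ T^2 := by linarith only [hTv, sq_nonneg a]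
    have m3 : μm * v n x ^ 2 ≤ R2 := by
      have h := mul_le_mul_of_nonneg_right (hμmle x) (sq_nonneg (v n x))
      linarith only [h, m1, m2, hT2R]
    have m4 : v n x ^ 2 ≤ R2/μm := by
      rw [le_div_iff₀ hμm0]
      linarith only [m3, mul_comm μm (v n x ^ 2)]
    calc |v n x| = Real.sqrt (v n x ^ 2) := (Real.sqrt_sq_eq_abs _).symm
      _ ≤ Real.sqrt (R2/μm) := Real.sqrt_le_sqrt m4
  -- extract tail with small ε and apply compactness
  obtain ⟨n0, hn0⟩ : ∃ n0, ∀ n ≥ n0, ε n ≤ δ := by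
    obtain ⟨n0, h⟩ := Metric.tendsto_atTop.1 hε0 δ hδpos
    refine ⟨n0, fun n hn => ?_⟩
    have := h n hn
    rw [Real.dist_eq, sub_zero] at this
    exact le_of_lt (lt_of_le_of_lt (le_abs_self _) this)
  set CB := Real.sqrt (R2/μm) with hCB
  have hmem : ∀ k, v (n0 + k) ∈ Metric.closedBall (0 : V → ℝ) CB := by
    intro k
    rw [Metric.mem_closedBall, dist_zero_right]
    refine (pi_norm_le_iff_of_nonneg (Real.sqrt_nonneg _)).2 fun x => ?_
    rw [Real.norm_eq_abs]
    exact hkey (n0 + k) (hn0 _ (Nat.le_add_right _ _)) x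
  obtain ⟨v0, -, σ, hσ, hconv⟩ :=
    (isCompact_closedBall (0 : V → ℝ) CB).tendsto_subseq hmem
  refine ⟨fun k => n0 + σ k, v0, fun i j hij => Nat.add_lt_add_left (hσ hij) n0, fun x => ?_⟩
  have := tendsto_pi_nhds.1 hconv x
  exact this
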